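/- Let P be the quadratic form on pairs of symmetric 2-tensors on \mathbb{R}^{1+4} defined by P(\pi,\theta) = \tfrac14 \bar{g}^{\mu\rho}\bar{g}^{\nu\sigma}(\pi_{\mu\rho}\theta_{\nu\sigma} - 2\pi_{\mu\nu}\theta_{\rho\sigma}), where \bar{g} is the Minkowski metric diag(-1,1,1,1,1). Then with respect to the null frame \mathcal{U}=\{L,\underline{L},S^1,S^2,\partial_y\} and the tangential frame \mathcal{T}=\{L,S^1,S^2,\partial_y\}, there is an absolute constant C with |P(\pi,\theta)| \le C( |\pi|_{\mathcal{T}\mathcal{U}}|\theta|_{\mathcal{T}\mathcal{U}} + |\pi|_{\mathcal{L}\mathcal{L}}|\theta| + |\pi||\theta|_{\mathcal{L}\mathcal{L}} ), where |\pi|_{\mathcal{V}\mathcal{W}} = \sum_{V\in\mathcal{V},W\in\mathcal{W}}|\pi_{VW}|, \pi_{VW}=\pi_{\alpha\beta}V^\alpha W^\beta, and |\pi| is the sum of all null-frame components. -/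

import Mathlib

open Real

namespace Stmt2

/-- Minkowski metric `diag(-1,1,1,1,1)` on `ℝ^{1+4}`. -/
noncomputable def η : Fin 5 → ℝ := ![-1, 1, 1, 1, 1]

/-- Minkowski inner product of two vectors. -/
noncomputable def gmet (V W : Fin 5 → ℝ) : ℝ := ∑ α, η α * V α * W α

noncomputable def rad (x : Fin 3 → ℝ) : ℝ := Real.sqrt (∑ j, (x j) ^ 2)

/-- `L = ∂_t + ∂_r` (components in the coordinates `t, x¹, x², x³, y`). -/
noncomputable def Lvec (x : Fin 3 → ℝ) : Fin 5 → ℝ :=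
  ![1, x 0 / rad x, x 1 / rad x, x 2 / rad x, 0]

/-- `L̲ = ∂_t - ∂_r`. -/
noncomputable def Lbvec (x : Fin 3 → ℝ) : Fin 5 → ℝ :=
  ![1, -(x 0 / rad x), -(x 1 / rad x), -(x 2 / rad x), 0]

/-- The circle direction `∂_y`. -/
noncomputable def ey : Fin 5 → ℝ := ![0, 0, 0, 0, 1]

/-- Frame component `π_{VW} = π_{αβ} V^α W^β` of a covariant 2-tensor. -/
noncomputable def comp (tp : Fin 5 → Fin 5 → ℝ) (V W : Fin 5 → ℝ) : ℝ :=
  ∑ α, ∑ β, tp α β * V α * W β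

/-- The weak-null quadratic form
`P(π,θ) = (1/4) ḡ^{μρ} ḡ^{νσ} (π_{μρ}θ_{νσ} - 2 π_{μν}θ_{ρσ})`. -/
noncomputable def Pform (tp tq : Fin 5 → Fin 5 → ℝ) : ℝ :=
  (1 / 4) * ((∑ μ, η μ * tp μ μ) * (∑ ν, η ν * tq ν ν)
    - 2 * ∑ μ, ∑ ν, η μ * η ν * tp μ ν * tq μ ν)

/-- The full null frame `𝒰 = {L, L̲, S¹, S², ∂_y}`. -/
noncomputable def frameU (x : Fin 3 → ℝ) (S1 S2 : Fin 5 → ℝ) : Fin 5 → (Fin 5 → ℝ) :=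
  ![Lvec x, Lbvec x, S1, S2, ey]

/-- The tangential frame `𝒯 = {L, S¹, S², ∂_y}`. -/
noncomputable def frameT (x : Fin 3 → ℝ) (S1 S2 : Fin 5 → ℝ) : Fin 4 → (Fin 5 → ℝ) :=
  ![Lvec x, S1, S2, ey]

/-- `|π|_{𝒯𝒰}`. -/
noncomputable def normTU (x : Fin 3 → ℝ) (S1 S2 : Fin 5 → ℝ) (tp : Fin 5 → Fin 5 → ℝ) : ℝ :=
  ∑ i : Fin 4, ∑ j : Fin 5, |comp tp (frameT x S1 S2 i) (frameU x S1 S2 j)|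

/-- `|π|`: sum of all null-frame components. -/
noncomputable def normFull (x : Fin 3 → ℝ) (S1 S2 : Fin 5 → ℝ) (tp : Fin 5 → Fin 5 → ℝ) : ℝ :=
  ∑ i : Fin 5, ∑ j : Fin 5, |comp tp (frameU x S1 S2 i) (frameU x S1 S2 j)|

/-! ### Auxiliary material -/

open Matrix

lemma radpos (x : Fin 3 → ℝ) (hx : x ≠ 0) : 0 < rad x := by
  apply Real.sqrt_pos.2
  rcases Function.ne_iff.1 hx with ⟨j, hj⟩
  have hj' : x j ≠ 0 := by simpa using hj
  have h1 : (0:ℝ) < (x j)^2 := (sq_nonneg _).lt_of_ne (Ne.symm (pow_ne_zero 2 hj'))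
  have h2 : (x j)^2 ≤ ∑ k, (x k)^2 :=
    Finset.single_le_sum (f := fun k => (x k)^2) (fun k _ => sq_nonneg _) (Finset.mem_univ j)
  linarith

lemma radsq (x : Fin 3 → ℝ) : rad x ^ 2 = (x 0)^2 + (x 1)^2 + (x 2)^2 := by
  rw [rad, Real.sq_sqrt (by positivity), Fin.sum_univ_three]

lemma gLL (x : Fin 3 → ℝ) (hx : x ≠ 0) : gmet (Lvec x) (Lvec x) = 0 := by
  have h := radsq x
  have hr := (radpos x hx).ne'
  simp only [gmet, Lvec, η, Fin.sum_univ_five, Matrix.cons_val_zero, Matrix.cons_val_one,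
    Matrix.head_cons, Matrix.cons_val_two, Matrix.tail_cons, Matrix.cons_val_three,
    Matrix.cons_val_four, Matrix.head_fin_const]
  field_simp
  nlinarith [h]

lemma gLLb (x : Fin 3 → ℝ) (hx : x ≠ 0) : gmet (Lvec x) (Lbvec x) = -2 := by
  have h := radsq x
  have hr := (radpos x hx).ne'
  simp only [gmet, Lvec, Lbvec, η, Fin.sum_univ_five, Matrix.cons_val_zero, Matrix.cons_val_one,
    Matrix.head_cons, Matrix.cons_val_two, Matrix.tail_cons, Matrix.cons_val_three,
    Matrix.cons_val_four, Matrix.head_fin_const]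
  field_simp
  nlinarith [h]

lemma gLbLb (x : Fin 3 → ℝ) (hx : x ≠ 0) : gmet (Lbvec x) (Lbvec x) = 0 := by
  have h := radsq x
  have hr := (radpos x hx).ne'
  simp only [gmet, Lvec, Lbvec, η, Fin.sum_univ_five, Matrix.cons_val_zero, Matrix.cons_val_one,
    Matrix.head_cons, Matrix.cons_val_two, Matrix.tail_cons, Matrix.cons_val_three,
    Matrix.cons_val_four, Matrix.head_fin_const]
  field_simp
  nlinarith [h]

lemma gLy (x : Fin 3 → ℝ) : gmet (Lvec x) ey = 0 := by
  simp [gmet, Lvec, ey, η, Fin.sum_univ_five, Matrix.vecHead, Matrix.vecTail]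

lemma gLby (x : Fin 3 → ℝ) : gmet (Lbvec x) ey = 0 := by
  simp [gmet, Lbvec, ey, η, Fin.sum_univ_five, Matrix.vecHead, Matrix.vecTail]

lemma gyy : gmet ey ey = 1 := by
  simp [gmet, ey, η, Fin.sum_univ_five, Matrix.vecHead, Matrix.vecTail]

lemma gsymm (V W : Fin 5 → ℝ) : gmet V W = gmet W V :=
  Finset.sum_congr rfl fun i _ => by ring

noncomputable def Gh : Matrix (Fin 5) (Fin 5) ℝ :=
  !![0,-2,0,0,0; -2,0,0,0,0; 0,0,1,0,0; 0,0,0,1,0; 0,0,0,0,1]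

noncomputable def N5 : Matrix (Fin 5) (Fin 5) ℝ :=
  !![0,-(1/2),0,0,0; -(1/2),0,0,0,0; 0,0,1,0,0; 0,0,0,1,0; 0,0,0,0,1]

lemma GhN : Gh * N5 = 1 := by
  ext i j
  fin_cases i <;> fin_cases j <;>
    simp [Gh, N5, Matrix.mul_apply, Fin.sum_univ_five, Matrix.one_apply,
      Matrix.vecHead, Matrix.vecTail]

lemma NGhN : N5 * (Gh * N5) = N5 := by
  rw [GhN, mul_one]

lemma N5symm : N5ᵀ = N5 := by
  ext i j
  fin_cases i <;> fin_cases j <;>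
    simp [N5, Matrix.vecHead, Matrix.vecTail]

lemma GG : (Matrix.diagonal η) * (Matrix.diagonal η) = (1 : Matrix (Fin 5) (Fin 5) ℝ) := by
  rw [Matrix.diagonal_mul_diagonal]
  have h : (fun i => η i * η i) = fun _ => (1:ℝ) := by
    funext i; fin_cases i <;> norm_num [η, Matrix.vecHead, Matrix.vecTail]
  rw [show (Matrix.diagonal fun i => η i * η i) = Matrix.diagonal fun _ => (1:ℝ) by rw [h]]
  exact Matrix.diagonal_one

set_option maxHeartbeats 2000000 in
lemma gram (x : Fin 3 → ℝ) (hx : x ≠ 0) (S1 S2 : Fin 5 → ℝ)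
    (h11 : gmet S1 S1 = 1) (h22 : gmet S2 S2 = 1) (h12 : gmet S1 S2 = 0)
    (hL1 : gmet (Lvec x) S1 = 0) (hL2 : gmet (Lvec x) S2 = 0)
    (hLb1 : gmet (Lbvec x) S1 = 0) (hLb2 : gmet (Lbvec x) S2 = 0)
    (hy1 : gmet ey S1 = 0) (hy2 : gmet ey S2 = 0) :
    Matrix.of (frameU x S1 S2) * Matrix.diagonal η * (Matrix.of (frameU x S1 S2))ᵀ = Gh := by
  have hentry : ∀ i j, (Matrix.of (frameU x S1 S2) * Matrix.diagonal η *
      (Matrix.of (frameU x S1 S2))ᵀ) i j = gmet (frameU x S1 S2 i) (frameU x S1 S2 j) := by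
    intro i j
    rw [Matrix.mul_apply]
    simp only [Matrix.mul_diagonal, Matrix.transpose_apply, Matrix.of_apply, gmet]
    exact Finset.sum_congr rfl fun k _ => by ring
  ext i j
  rw [hentry]
  fin_cases i <;> fin_cases j <;>
    simp only [frameU, Gh, Matrix.cons_val_zero, Matrix.cons_val_one, Matrix.head_cons,
      Matrix.cons_val_two, Matrix.tail_cons, Matrix.cons_val_three, Matrix.cons_val_four,
      Matrix.head_fin_const, Matrix.of_apply, Matrix.cons_val', Matrix.cons_val_fin_one,
      Matrix.empty_val', Matrix.vecHead, Matrix.vecTail, Function.comp] <;>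
    first
      | exact gLL x hx
      | exact gLLb x hx
      | exact (gsymm _ _).trans (gLLb x hx)
      | exact gLbLb x hx
      | exact gLy x
      | exact gLby x
      | exact (gsymm _ _).trans (gLy x)
      | exact (gsymm _ _).trans (gLby x)
      | exact gyy
      | exact h11
      | exact h22
      | exact h12
      | exact (gsymm _ _).trans h12
      | exact hL1
      | exact (gsymm _ _).trans hL1
      | exact hL2
      | exact (gsymm _ _).trans hL2
      | exact hLb1
      | exact (gsymm _ _).trans hLb1
      | exact hLb2
      | exact (gsymm _ _).trans hLb2
      | exact hy1
      | exact (gsymm _ _).trans hy1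
      | exact hy2
      | exact (gsymm _ _).trans hy2

set_option maxHeartbeats 1000000 in
lemma keyG (x : Fin 3 → ℝ) (hx : x ≠ 0) (S1 S2 : Fin 5 → ℝ)
    (h11 : gmet S1 S1 = 1) (h22 : gmet S2 S2 = 1) (h12 : gmet S1 S2 = 0)
    (hL1 : gmet (Lvec x) S1 = 0) (hL2 : gmet (Lvec x) S2 = 0)
    (hLb1 : gmet (Lbvec x) S1 = 0) (hLb2 : gmet (Lbvec x) S2 = 0)
    (hy1 : gmet ey S1 = 0) (hy2 : gmet ey S2 = 0) :
    (Matrix.diagonal η : Matrix (Fin 5) (Fin 5) ℝ) =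
      (Matrix.of (frameU x S1 S2))ᵀ * N5 * Matrix.of (frameU x S1 S2) := by
  set M := Matrix.of (frameU x S1 S2) with hMdef
  set G := (Matrix.diagonal η : Matrix (Fin 5) (Fin 5) ℝ) with hGdef
  have hGram : M * G * Mᵀ = Gh := gram x hx S1 S2 h11 h22 h12 hL1 hL2 hLb1 hLb2 hy1 hy2
  have hMR : M * (G * Mᵀ * N5) = 1 := by
    calc M * (G * Mᵀ * N5) = (M * G * Mᵀ) * N5 := by simp only [Matrix.mul_assoc]
      _ = Gh * N5 := by rw [hGram]
      _ = 1 := GhN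
  set R := G * Mᵀ * N5 with hRdef
  have hRM : R * M = 1 := mul_eq_one_comm.1 hMR
  have h1 : G * Mᵀ = R * Gh := by
    calc G * Mᵀ = (R * M) * (G * Mᵀ) := by rw [hRM, one_mul]
      _ = R * (M * G * Mᵀ) := by simp only [Matrix.mul_assoc]
      _ = R * Gh := by rw [hGram]
  have hMtRt : Mᵀ * Rᵀ = 1 := by
    rw [← Matrix.transpose_mul, hRM, Matrix.transpose_one]
  have hRt : Rᵀ = N5 * (M * G) := by
    rw [hRdef, Matrix.transpose_mul, Matrix.transpose_mul, N5symm,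
      Matrix.transpose_transpose, hGdef, Matrix.diagonal_transpose]
  have h2 : G = R * Gh * Rᵀ := by
    calc G = G * (Mᵀ * Rᵀ) := by rw [hMtRt, mul_one]
      _ = (G * Mᵀ) * Rᵀ := by simp only [Matrix.mul_assoc]
      _ = R * Gh * Rᵀ := by rw [h1]
  have h5 : G = G * ((Mᵀ * N5 * M) * G) := by
    calc G = R * Gh * Rᵀ := h2
      _ = G * Mᵀ * N5 * Gh * (N5 * (M * G)) := by rw [hRt, hRdef]
      _ = G * (Mᵀ * ((N5 * (Gh * N5)) * (M * G))) := by simp only [Matrix.mul_assoc]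
      _ = G * (Mᵀ * (N5 * (M * G))) := by rw [NGhN]
      _ = G * ((Mᵀ * N5 * M) * G) := by simp only [Matrix.mul_assoc]
  have h6 : (1 : Matrix (Fin 5) (Fin 5) ℝ) = (Mᵀ * N5 * M) * G := by
    calc (1 : Matrix (Fin 5) (Fin 5) ℝ) = G * G := GG.symm
      _ = G * (G * ((Mᵀ * N5 * M) * G)) := by nth_rewrite 2 [h5]; rfl
      _ = (G * G) * ((Mᵀ * N5 * M) * G) := by simp only [Matrix.mul_assoc]
      _ = (Mᵀ * N5 * M) * G := by rw [GG, one_mul]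
  calc G = 1 * G := (one_mul G).symm
    _ = ((Mᵀ * N5 * M) * G) * G := by rw [← h6]
    _ = (Mᵀ * N5 * M) * (G * G) := by simp only [Matrix.mul_assoc]
    _ = Mᵀ * N5 * M := by rw [GG, mul_one]

lemma Phat_apply (x : Fin 3 → ℝ) (S1 S2 : Fin 5 → ℝ) (tp : Fin 5 → Fin 5 → ℝ) (i j : Fin 5) :
    (Matrix.of (frameU x S1 S2) * Matrix.of tp * (Matrix.of (frameU x S1 S2))ᵀ) i j
      = comp tp (frameU x S1 S2 i) (frameU x S1 S2 j) := by
  rw [Matrix.mul_apply]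
  simp only [Matrix.mul_apply, Matrix.transpose_apply, Matrix.of_apply, Finset.sum_mul]
  rw [comp, Finset.sum_comm]
  exact Finset.sum_congr rfl fun k _ => Finset.sum_congr rfl fun l _ => by ring

lemma Pform_trace (tp tq : Fin 5 → Fin 5 → ℝ) (hq : ∀ α β, tq α β = tq β α) :
    Pform tp tq = (1/4) * (Matrix.trace (Matrix.diagonal η * Matrix.of tp) *
        Matrix.trace (Matrix.diagonal η * Matrix.of tq)
      - 2 * Matrix.trace (Matrix.diagonal η * Matrix.of tp
          * (Matrix.diagonal η * Matrix.of tq))) := by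
  have h1 : ∀ tr : Fin 5 → Fin 5 → ℝ,
      Matrix.trace (Matrix.diagonal η * Matrix.of tr) = ∑ μ, η μ * tr μ μ := by
    intro tr
    simp [Matrix.trace, Matrix.diag, Matrix.diagonal_mul]
  have h2 : Matrix.trace (Matrix.diagonal η * Matrix.of tp *
        (Matrix.diagonal η * Matrix.of tq))
      = ∑ μ, ∑ ν, η μ * η ν * tp μ ν * tq μ ν := by
    simp only [Matrix.trace, Matrix.diag, Matrix.mul_apply, Matrix.diagonal_apply,
      Matrix.of_apply, ite_mul, zero_mul, Finset.sum_ite_eq, Finset.sum_ite_eq',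
      Finset.mem_univ, if_true]
    refine Finset.sum_congr rfl fun i _ => Finset.sum_congr rfl fun j _ => ?_
    rw [hq j i]
    ring
  rw [h1, h1, h2, Pform]

lemma tr1 (P : Matrix (Fin 5) (Fin 5) ℝ) :
    Matrix.trace (N5 * P) =
      -(1/2) * P 0 1 - (1/2) * P 1 0 + P 2 2 + P 3 3 + P 4 4 := by
  simp [Matrix.trace, Matrix.diag, Matrix.mul_apply, Fin.sum_univ_five, N5,
    Matrix.vecHead, Matrix.vecTail]
  ring

set_option maxRecDepth 100000 in
lemma tr2 (P Q : Matrix (Fin 5) (Fin 5) ℝ) :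
    Matrix.trace (N5 * P * (N5 * Q)) =
      (1/4) * (P 1 0 * Q 1 0 + P 1 1 * Q 0 0 + P 0 0 * Q 1 1 + P 0 1 * Q 0 1)
      - (1/2) * (P 1 2 * Q 2 0 + P 1 3 * Q 3 0 + P 1 4 * Q 4 0)
      - (1/2) * (P 0 2 * Q 2 1 + P 0 3 * Q 3 1 + P 0 4 * Q 4 1)
      - (1/2) * (P 2 0 * Q 1 2 + P 3 0 * Q 1 3 + P 4 0 * Q 1 4)
      - (1/2) * (P 2 1 * Q 0 2 + P 3 1 * Q 0 3 + P 4 1 * Q 0 4)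
      + (P 2 2 * Q 2 2 + P 2 3 * Q 3 2 + P 2 4 * Q 4 2
        + P 3 2 * Q 2 3 + P 3 3 * Q 3 3 + P 3 4 * Q 4 3
        + P 4 2 * Q 2 4 + P 4 3 * Q 3 4 + P 4 4 * Q 4 4) := by
  simp only [Matrix.trace, Matrix.diag, Matrix.mul_apply, Fin.sum_univ_five]
  norm_num [N5, Matrix.cons_val_zero, Matrix.cons_val_one, Matrix.cons_val_two, Matrix.cons_val_three, Matrix.cons_val_four, Matrix.head_cons, Matrix.tail_cons]
  ring

lemma comp_symm (tr : Fin 5 → Fin 5 → ℝ) (h : ∀ α β, tr α β = tr β α) (V W : Fin 5 → ℝ) :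
    comp tr V W = comp tr W V := by
  rw [comp, comp, Finset.sum_comm]
  exact Finset.sum_congr rfl fun i _ => Finset.sum_congr rfl fun j _ => by rw [h j i]; ring

lemma prod_bound {u v X Y : ℝ} (hu : |u| ≤ X) (hv : |v| ≤ Y) :
    -(X*Y) ≤ u*v ∧ u*v ≤ X*Y := by
  have h : |u*v| ≤ X*Y := by
    rw [abs_mul]
    exact mul_le_mul hu hv (abs_nonneg v) ((abs_nonneg u).trans hu)
  exact ⟨by linarith [neg_abs_le (u*v)], by linarith [le_abs_self (u*v)]⟩

set_option maxHeartbeats 4000000 in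
/-- Structure of the weak null terms with respect to the null frame. -/
theorem weak_null_structure :
    ∃ C : ℝ, 0 < C ∧ ∀ x : Fin 3 → ℝ, x ≠ 0 →
      ∀ S1 S2 : Fin 5 → ℝ,
        gmet S1 S1 = 1 → gmet S2 S2 = 1 → gmet S1 S2 = 0 →
        gmet (Lvec x) S1 = 0 → gmet (Lvec x) S2 = 0 →
        gmet (Lbvec x) S1 = 0 → gmet (Lbvec x) S2 = 0 →
        gmet ey S1 = 0 → gmet ey S2 = 0 →
        ∀ tp tq : Fin 5 → Fin 5 → ℝ,
          (∀ α β, tp α β = tp β α) → (∀ α β, tq α β = tq β α) →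
          |Pform tp tq| ≤ C * (normTU x S1 S2 tp * normTU x S1 S2 tq +
            |comp tp (Lvec x) (Lvec x)| * normFull x S1 S2 tq +
            normFull x S1 S2 tp * |comp tq (Lvec x) (Lvec x)|) := by
  refine ⟨100, by norm_num, ?_⟩
  intro x hx S1 S2 h11 h22 h12 hL1 hL2 hLb1 hLb2 hy1 hy2 tp tq hp hq
  have hkey := keyG x hx S1 S2 h11 h22 h12 hL1 hL2 hLb1 hLb2 hy1 hy2
  set M := Matrix.of (frameU x S1 S2) with hMdef
  set p : Fin 5 → Fin 5 → ℝ :=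
    fun i j => comp tp (frameU x S1 S2 i) (frameU x S1 S2 j) with hpdef
  set q : Fin 5 → Fin 5 → ℝ :=
    fun i j => comp tq (frameU x S1 S2 i) (frameU x S1 S2 j) with hqdef
  have hPp : ∀ i j, (M * Matrix.of tp * Mᵀ) i j = p i j := fun i j => Phat_apply x S1 S2 tp i j
  have hPq : ∀ i j, (M * Matrix.of tq * Mᵀ) i j = q i j := fun i j => Phat_apply x S1 S2 tq i j
  have hs1 : ∀ tr : Fin 5 → Fin 5 → ℝ, Matrix.trace (Matrix.diagonal η * Matrix.of tr)
      = Matrix.trace (N5 * (M * Matrix.of tr * Mᵀ)) := by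
    intro tr
    rw [hkey]
    rw [show (Mᵀ * N5 * M) * Matrix.of tr = Mᵀ * (N5 * M * Matrix.of tr) by
      simp only [Matrix.mul_assoc], Matrix.trace_mul_comm]
    congr 1
    simp only [Matrix.mul_assoc]
  have hs2 : Matrix.trace (Matrix.diagonal η * Matrix.of tp * (Matrix.diagonal η * Matrix.of tq))
      = Matrix.trace (N5 * (M * Matrix.of tp * Mᵀ) * (N5 * (M * Matrix.of tq * Mᵀ))) := by
    rw [hkey]
    rw [show (Mᵀ * N5 * M) * Matrix.of tp * ((Mᵀ * N5 * M) * Matrix.of tq)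
        = Mᵀ * (N5 * (M * Matrix.of tp * Mᵀ) * (N5 * (M * Matrix.of tq))) by
      simp only [Matrix.mul_assoc], Matrix.trace_mul_comm]
    congr 1
    simp only [Matrix.mul_assoc]
  have hPident : Pform tp tq = (1/4) * (
      (-(1/2) * p 0 1 - (1/2) * p 1 0 + p 2 2 + p 3 3 + p 4 4) *
      (-(1/2) * q 0 1 - (1/2) * q 1 0 + q 2 2 + q 3 3 + q 4 4)
      - 2 * ((1/4) * (p 1 0 * q 1 0 + p 1 1 * q 0 0 + p 0 0 * q 1 1 + p 0 1 * q 0 1)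
        - (1/2) * (p 1 2 * q 2 0 + p 1 3 * q 3 0 + p 1 4 * q 4 0)
        - (1/2) * (p 0 2 * q 2 1 + p 0 3 * q 3 1 + p 0 4 * q 4 1)
        - (1/2) * (p 2 0 * q 1 2 + p 3 0 * q 1 3 + p 4 0 * q 1 4)
        - (1/2) * (p 2 1 * q 0 2 + p 3 1 * q 0 3 + p 4 1 * q 0 4)
        + (p 2 2 * q 2 2 + p 2 3 * q 3 2 + p 2 4 * q 4 2
          + p 3 2 * q 2 3 + p 3 3 * q 3 3 + p 3 4 * q 4 3
          + p 4 2 * q 2 4 + p 4 3 * q 3 4 + p 4 4 * q 4 4))) := by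
    rw [Pform_trace tp tq hq, hs1 tp, hs1 tq, hs2, tr1, tr1, tr2]
    simp only [hPp, hPq]
  have psymm : ∀ i j, p i j = p j i := fun i j => comp_symm tp hp _ _
  have qsymm : ∀ i j, q i j = q j i := fun i j => comp_symm tq hq _ _
  set A := normTU x S1 S2 tp with hAdef
  set B := normTU x S1 S2 tq with hBdef
  set FP := normFull x S1 S2 tp with hFPdef
  set FQ := normFull x S1 S2 tq with hFQdef
  have hframe : ∀ k : Fin 4, frameT x S1 S2 k = frameU x S1 S2 (![0,2,3,4] k) := by
    intro k; fin_cases k <;> rfl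
  have bp : ∀ (k : Fin 4) (j : Fin 5), |p (![0,2,3,4] k) j| ≤ A := by
    intro k j
    have e : p (![0,2,3,4] k) j = comp tp (frameT x S1 S2 k) (frameU x S1 S2 j) := by
      rw [hpdef, hframe k]
    rw [e]
    calc |comp tp (frameT x S1 S2 k) (frameU x S1 S2 j)|
        ≤ ∑ j' : Fin 5, |comp tp (frameT x S1 S2 k) (frameU x S1 S2 j')| :=
          Finset.single_le_sum (f := fun j' => |comp tp (frameT x S1 S2 k) (frameU x S1 S2 j')|)
            (fun _ _ => abs_nonneg _) (Finset.mem_univ j)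
      _ ≤ normTU x S1 S2 tp := Finset.single_le_sum
          (f := fun i => ∑ j' : Fin 5, |comp tp (frameT x S1 S2 i) (frameU x S1 S2 j')|)
          (fun _ _ => Finset.sum_nonneg fun _ _ => abs_nonneg _) (Finset.mem_univ k)
  have bq : ∀ (k : Fin 4) (j : Fin 5), |q (![0,2,3,4] k) j| ≤ B := by
    intro k j
    have e : q (![0,2,3,4] k) j = comp tq (frameT x S1 S2 k) (frameU x S1 S2 j) := by
      rw [hqdef, hframe k]
    rw [e]
    calc |comp tq (frameT x S1 S2 k) (frameU x S1 S2 j)|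
        ≤ ∑ j' : Fin 5, |comp tq (frameT x S1 S2 k) (frameU x S1 S2 j')| :=
          Finset.single_le_sum (f := fun j' => |comp tq (frameT x S1 S2 k) (frameU x S1 S2 j')|)
            (fun _ _ => abs_nonneg _) (Finset.mem_univ j)
      _ ≤ normTU x S1 S2 tq := Finset.single_le_sum
          (f := fun i => ∑ j' : Fin 5, |comp tq (frameT x S1 S2 i) (frameU x S1 S2 j')|)
          (fun _ _ => Finset.sum_nonneg fun _ _ => abs_nonneg _) (Finset.mem_univ k)
  have bpF : ∀ i j, |p i j| ≤ FP := by
    intro i j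
    calc |p i j| ≤ ∑ j' : Fin 5, |comp tp (frameU x S1 S2 i) (frameU x S1 S2 j')| :=
          Finset.single_le_sum (f := fun j' => |comp tp (frameU x S1 S2 i) (frameU x S1 S2 j')|)
            (fun _ _ => abs_nonneg _) (Finset.mem_univ j)
      _ ≤ normFull x S1 S2 tp := Finset.single_le_sum
          (f := fun i => ∑ j' : Fin 5, |comp tp (frameU x S1 S2 i) (frameU x S1 S2 j')|)
          (fun _ _ => Finset.sum_nonneg fun _ _ => abs_nonneg _) (Finset.mem_univ i)
  have bqF : ∀ i j, |q i j| ≤ FQ := by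
    intro i j
    calc |q i j| ≤ ∑ j' : Fin 5, |comp tq (frameU x S1 S2 i) (frameU x S1 S2 j')| :=
          Finset.single_le_sum (f := fun j' => |comp tq (frameU x S1 S2 i) (frameU x S1 S2 j')|)
            (fun _ _ => abs_nonneg _) (Finset.mem_univ j)
      _ ≤ normFull x S1 S2 tq := Finset.single_le_sum
          (f := fun i => ∑ j' : Fin 5, |comp tq (frameU x S1 S2 i) (frameU x S1 S2 j')|)
          (fun _ _ => Finset.sum_nonneg fun _ _ => abs_nonneg _) (Finset.mem_univ i)
  -- individual component bounds
  have z01 : |p 0 1| ≤ A := bp 0 1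
  have z10 : |p 1 0| ≤ A := by rw [psymm 1 0]; exact bp 0 1
  have z12 : |p 1 2| ≤ A := by rw [psymm 1 2]; exact bp 1 1
  have z13 : |p 1 3| ≤ A := by rw [psymm 1 3]; exact bp 2 1
  have z14 : |p 1 4| ≤ A := by rw [psymm 1 4]; exact bp 3 1
  have z02 : |p 0 2| ≤ A := bp 0 2
  have z03 : |p 0 3| ≤ A := bp 0 3
  have z04 : |p 0 4| ≤ A := bp 0 4
  have z20 : |p 2 0| ≤ A := bp 1 0
  have z30 : |p 3 0| ≤ A := bp 2 0
  have z40 : |p 4 0| ≤ A := bp 3 0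
  have z21 : |p 2 1| ≤ A := bp 1 1
  have z31 : |p 3 1| ≤ A := bp 2 1
  have z41 : |p 4 1| ≤ A := bp 3 1
  have z22 : |p 2 2| ≤ A := bp 1 2
  have z23 : |p 2 3| ≤ A := bp 1 3
  have z24 : |p 2 4| ≤ A := bp 1 4
  have z32 : |p 3 2| ≤ A := bp 2 2
  have z33 : |p 3 3| ≤ A := bp 2 3
  have z34 : |p 3 4| ≤ A := bp 2 4
  have z42 : |p 4 2| ≤ A := bp 3 2
  have z43 : |p 4 3| ≤ A := bp 3 3
  have z44 : |p 4 4| ≤ A := bp 3 4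
  have z11F : |p 1 1| ≤ FP := bpF 1 1
  have w01 : |q 0 1| ≤ B := bq 0 1
  have w10 : |q 1 0| ≤ B := by rw [qsymm 1 0]; exact bq 0 1
  have w12 : |q 1 2| ≤ B := by rw [qsymm 1 2]; exact bq 1 1
  have w13 : |q 1 3| ≤ B := by rw [qsymm 1 3]; exact bq 2 1
  have w14 : |q 1 4| ≤ B := by rw [qsymm 1 4]; exact bq 3 1
  have w02 : |q 0 2| ≤ B := bq 0 2
  have w03 : |q 0 3| ≤ B := bq 0 3
  have w04 : |q 0 4| ≤ B := bq 0 4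
  have w20 : |q 2 0| ≤ B := bq 1 0
  have w30 : |q 3 0| ≤ B := bq 2 0
  have w40 : |q 4 0| ≤ B := bq 3 0
  have w21 : |q 2 1| ≤ B := bq 1 1
  have w31 : |q 3 1| ≤ B := bq 2 1
  have w41 : |q 4 1| ≤ B := bq 3 1
  have w22 : |q 2 2| ≤ B := bq 1 2
  have w23 : |q 2 3| ≤ B := bq 1 3
  have w24 : |q 2 4| ≤ B := bq 1 4
  have w32 : |q 3 2| ≤ B := bq 2 2
  have w33 : |q 3 3| ≤ B := bq 2 3
  have w34 : |q 3 4| ≤ B := bq 2 4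
  have w42 : |q 4 2| ≤ B := bq 3 2
  have w43 : |q 4 3| ≤ B := bq 3 3
  have w44 : |q 4 4| ≤ B := bq 3 4
  have w11F : |q 1 1| ≤ FQ := bqF 1 1
  -- abbreviate the three pieces
  set T1 := (-(1/2) * p 0 1 - (1/2) * p 1 0 + p 2 2 + p 3 3 + p 4 4 : ℝ) with hT1def
  set T2 := (-(1/2) * q 0 1 - (1/2) * q 1 0 + q 2 2 + q 3 3 + q 4 4 : ℝ) with hT2def
  set TT := ((1/4) * (p 1 0 * q 1 0 + p 1 1 * q 0 0 + p 0 0 * q 1 1 + p 0 1 * q 0 1)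
        - (1/2) * (p 1 2 * q 2 0 + p 1 3 * q 3 0 + p 1 4 * q 4 0)
        - (1/2) * (p 0 2 * q 2 1 + p 0 3 * q 3 1 + p 0 4 * q 4 1)
        - (1/2) * (p 2 0 * q 1 2 + p 3 0 * q 1 3 + p 4 0 * q 1 4)
        - (1/2) * (p 2 1 * q 0 2 + p 3 1 * q 0 3 + p 4 1 * q 0 4)
        + (p 2 2 * q 2 2 + p 2 3 * q 3 2 + p 2 4 * q 4 2
          + p 3 2 * q 2 3 + p 3 3 * q 3 3 + p 3 4 * q 4 3
          + p 4 2 * q 2 4 + p 4 3 * q 3 4 + p 4 4 * q 4 4) : ℝ) with hTTdef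
  have ht1 : |T1| ≤ 4*A := by
    have a1 := abs_le.1 z01
    have a2 := abs_le.1 z10
    have a3 := abs_le.1 z22
    have a4 := abs_le.1 z33
    have a5 := abs_le.1 z44
    rw [hT1def, abs_le]
    constructor <;>
      linarith only [a1.1, a1.2, a2.1, a2.2, a3.1, a3.2, a4.1, a4.2, a5.1, a5.2]
  have ht2 : |T2| ≤ 4*B := by
    have a1 := abs_le.1 w01
    have a2 := abs_le.1 w10
    have a3 := abs_le.1 w22
    have a4 := abs_le.1 w33
    have a5 := abs_le.1 w44
    rw [hT2def, abs_le]
    constructor <;>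
      linarith only [a1.1, a1.2, a2.1, a2.2, a3.1, a3.2, a4.1, a4.2, a5.1, a5.2]
  have hAnn : (0:ℝ) ≤ A := Finset.sum_nonneg fun _ _ => Finset.sum_nonneg fun _ _ => abs_nonneg _
  have hBnn : (0:ℝ) ≤ B := Finset.sum_nonneg fun _ _ => Finset.sum_nonneg fun _ _ => abs_nonneg _
  have hFPnn : (0:ℝ) ≤ FP :=
    Finset.sum_nonneg fun _ _ => Finset.sum_nonneg fun _ _ => abs_nonneg _
  have hFQnn : (0:ℝ) ≤ FQ :=
    Finset.sum_nonneg fun _ _ => Finset.sum_nonneg fun _ _ => abs_nonneg _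
  have hABnn : (0:ℝ) ≤ A * B := mul_nonneg hAnn hBnn
  have hPFQnn : (0:ℝ) ≤ |p 0 0| * FQ := mul_nonneg (abs_nonneg _) hFQnn
  have hFPQnn : (0:ℝ) ≤ FP * |q 0 0| := mul_nonneg hFPnn (abs_nonneg _)
  -- product bounds
  have c1 := prod_bound z10 w10
  have c2 := prod_bound z11F (le_refl |q 0 0|)
  have c3 := prod_bound (le_refl |p 0 0|) w11F
  have c4 := prod_bound z01 w01
  have c5 := prod_bound z12 w20
  have c6 := prod_bound z13 w30
  have c7 := prod_bound z14 w40
  have c8 := prod_bound z02 w21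
  have c9 := prod_bound z03 w31
  have c10 := prod_bound z04 w41
  have c11 := prod_bound z20 w12
  have c12 := prod_bound z30 w13
  have c13 := prod_bound z40 w14
  have c14 := prod_bound z21 w02
  have c15 := prod_bound z31 w03
  have c16 := prod_bound z41 w04
  have c17 := prod_bound z22 w22
  have c18 := prod_bound z23 w32
  have c19 := prod_bound z24 w42
  have c20 := prod_bound z32 w23
  have c21 := prod_bound z33 w33
  have c22 := prod_bound z34 w43
  have c23 := prod_bound z42 w24
  have c24 := prod_bound z43 w34
  have c25 := prod_bound z44 w44
  have hTT2 : TT ≤ 16*(A*B) + (1/4)*(|p 0 0| * FQ) + (1/4)*(FP * |q 0 0|) ∧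
      -(16*(A*B) + (1/4)*(|p 0 0| * FQ) + (1/4)*(FP * |q 0 0|)) ≤ TT := by
    rw [hTTdef]
    constructor <;>
      linarith only [c1.1, c1.2, c2.1, c2.2, c3.1, c3.2, c4.1, c4.2, c5.1, c5.2, c6.1, c6.2,
        c7.1, c7.2, c8.1, c8.2, c9.1, c9.2, c10.1, c10.2, c11.1, c11.2, c12.1, c12.2,
        c13.1, c13.2, c14.1, c14.2, c15.1, c15.2, c16.1, c16.2, c17.1, c17.2, c18.1, c18.2,
        c19.1, c19.2, c20.1, c20.2, c21.1, c21.2, c22.1, c22.2, c23.1, c23.2, c24.1, c24.2,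
        c25.1, c25.2, hABnn, hPFQnn, hFPQnn]
  have hT12 := prod_bound ht1 ht2
  have e1 : comp tp (Lvec x) (Lvec x) = p 0 0 := by rw [hpdef]; rfl
  have e2 : comp tq (Lvec x) (Lvec x) = q 0 0 := by rw [hqdef]; rfl
  clear_value T1 T2 TT A B FP FQ p q
  rw [e1, e2, hPident, abs_le]
  constructor <;>
    linarith only [hT12.1, hT12.2, hTT2.1, hTT2.2, hABnn, hPFQnn, hFPQnn]

end Stmt2
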